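/- Let n ≥ 1 be a natural number and p ∈ ℝ. Let y₁ < y₂ < ... < y_m be the distinct elements of the set {frac(i·p) : i = 1, ..., n} ⊂ [0,1), where frac denotes the fractional part. Then the set of consecutive differences {y_{j+1} − y_j : 1 ≤ j ≤ m−1} has at most 3 elements. -/

import Mathlib

private lemma memY_aux (n : ℕ) (p : ℝ) (k : ℤ) (hk1 : 1 ≤ k) (hkn : k ≤ (n : ℤ))
    (v : ℝ) (h0 : 0 ≤ v) (h1 : v < 1) (m : ℤ) (hm : (k : ℝ) * p - v = m) :
    ∃ i : ℕ, 1 ≤ i ∧ i ≤ n ∧ v = Int.fract (i * p) := by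
  refine ⟨k.toNat, by omega, by omega, ?_⟩
  have hcast : ((k.toNat : ℕ) : ℝ) = (k : ℝ) := by
    rw [← Int.cast_natCast, Int.toNat_of_nonneg (by omega)]
  rw [hcast]
  exact (Int.fract_eq_iff.mpr ⟨h0, h1, m, hm⟩).symm

theorem three_gap_theorem (n : ℕ) (hn : 1 ≤ n) (p : ℝ)
    (Y : Set ℝ) (hY : Y = {y | ∃ i : ℕ, 1 ≤ i ∧ i ≤ n ∧ y = Int.fract (i * p)})
    (D : Set ℝ)
    (hD : D = {d | ∃ y ∈ Y, ∃ z ∈ Y, y < z ∧ (∀ w ∈ Y, ¬(y < w ∧ w < z)) ∧ d = z - y}) :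
    D.encard ≤ 3 := by
  classical
  have hf : ∀ x : ℝ, Int.fract x = x - ⌊x⌋ := fun _ => rfl
  set S : Finset ℕ := (Finset.Icc 1 n).filter (fun i => 0 < Int.fract (i * p)) with hSdef
  by_cases hne : S.Nonempty
  · obtain ⟨s, hsS, hsmin⟩ := Finset.exists_min_image S (fun i => Int.fract (i * p)) hne
    obtain ⟨t, htS, htmax⟩ := Finset.exists_max_image S (fun i => Int.fract (i * p)) hne
    obtain ⟨hs_icc, hs_pos⟩ := Finset.mem_filter.mp hsS
    obtain ⟨hs1, hs2⟩ := Finset.mem_Icc.mp hs_icc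
    obtain ⟨ht_icc, ht_pos⟩ := Finset.mem_filter.mp htS
    obtain ⟨ht1, ht2⟩ := Finset.mem_Icc.mp ht_icc
    set δ₁ := Int.fract (s * p) with hδ₁
    set δ₂ := 1 - Int.fract (t * p) with hδ₂
    have hδ₁pos : 0 < δ₁ := hs_pos
    have hδ₂pos : 0 < δ₂ := by
      have := Int.fract_lt_one ((t : ℝ) * p); rw [hδ₂]; linarith
    have lb : ∀ (k : ℤ), 1 ≤ k → k ≤ (n : ℤ) → ∀ (v : ℝ) (m : ℤ), (k : ℝ) * p - v = m →
        0 < v → v < 1 → δ₁ ≤ v ∧ δ₂ ≤ 1 - v := by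
      intro k hk1 hkn v m hm h0 h1
      obtain ⟨a, ha1, ha2, hva⟩ := memY_aux n p k hk1 hkn v h0.le h1 m hm
      have haS : a ∈ S := Finset.mem_filter.mpr
        ⟨Finset.mem_Icc.mpr ⟨ha1, ha2⟩, by rw [← hva]; exact h0⟩
      have h₁ := hsmin a haS
      have h₂ := htmax a haS
      rw [← hva] at h₁ h₂
      exact ⟨h₁, by rw [hδ₂]; linarith⟩
    have hsub : D ⊆ ({δ₁, δ₂, δ₁ + δ₂} : Set ℝ) := by
      rw [hD]
      rintro d ⟨y, hy, z, hz, hyz, hcon, rfl⟩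
      rw [hY] at hy hz
      obtain ⟨i, hi1, hi2, rfl⟩ := hy
      obtain ⟨j, hj1, hj2, rfl⟩ := hz
      set y := Int.fract ((i : ℕ) * p) with hy'
      set z := Int.fract ((j : ℕ) * p) with hz'
      have hy0 : 0 ≤ y := Int.fract_nonneg _
      have hz1 : z < 1 := Int.fract_lt_one _
      have hd0 : 0 < z - y := by linarith
      have hd1 : z - y < 1 := by linarith
      have hij : i ≠ j := by rintro rfl; exact lt_irrefl _ hyz
      have between : ∀ (k : ℤ), 1 ≤ k → k ≤ (n : ℤ) → ∀ (v : ℝ) (m : ℤ),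
          (k : ℝ) * p - v = m → y < v → v < z → False := by
        intro k hk1 hkn v m hm hv1 hv2
        obtain ⟨a, ha1, ha2, hva⟩ := memY_aux n p k hk1 hkn v (by linarith) (by linarith) m hm
        exact hcon v (by rw [hY]; exact ⟨a, ha1, ha2, hva⟩) ⟨hv1, hv2⟩
      have claimA : δ₁ < z - y → j ≤ s := by
        intro h
        by_contra hc
        push_neg at hc
        refine between ((j : ℤ) - s) (by omega) (by omega) (z - δ₁)
          (⌊(j : ℝ) * p⌋ - ⌊(s : ℝ) * p⌋) ?_ (by linarith) (by linarith)
        rw [hz', hδ₁]; push_cast [hf]; ring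
      have claimB : δ₂ < z - y → i ≤ t := by
        intro h
        by_contra hc
        push_neg at hc
        refine between ((i : ℤ) - t) (by omega) (by omega) (y + δ₂)
          (⌊(i : ℝ) * p⌋ - ⌊(t : ℝ) * p⌋ - 1) ?_ (by linarith) (by linarith)
        rw [hy', hδ₂]; push_cast [hf]; ring
      have claimC : ¬(δ₁ + δ₂ < z - y) := by
        intro h
        have hjs : j ≤ s := claimA (by linarith)
        have hit : i ≤ t := claimB (by linarith)
        rcases le_or_gt ((i : ℤ) + s - t) 0 with hk | hk
        · refine between ((j : ℤ) + t - s) (by omega) (by omega) (z - δ₁ - δ₂)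
            (⌊(j : ℝ) * p⌋ + ⌊(t : ℝ) * p⌋ - ⌊(s : ℝ) * p⌋ + 1) ?_ (by linarith) (by linarith)
          rw [hz', hδ₁, hδ₂]; push_cast [hf]; ring
        · refine between ((i : ℤ) + s - t) (by omega) (by omega) (y + δ₁ + δ₂)
            (⌊(i : ℝ) * p⌋ + ⌊(s : ℝ) * p⌋ - ⌊(t : ℝ) * p⌋ - 1) ?_ (by linarith) (by linarith)
          rw [hy', hδ₁, hδ₂]; push_cast [hf]; ring
      have goal : z - y = δ₁ ∨ z - y = δ₂ ∨ z - y = δ₁ + δ₂ := by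
        rcases lt_trichotomy i j with hlt | heq | hlt
        · have hm1 : ((j : ℤ) - i : ℝ) * p - (z - y) = ((⌊(j : ℝ) * p⌋ - ⌊(i : ℝ) * p⌋ : ℤ) : ℝ) := by
            rw [hy', hz']; push_cast [hf]; ring
          have h1 : δ₁ ≤ z - y :=
            (lb ((j : ℤ) - i) (by omega) (by omega) (z - y) _ (by exact_mod_cast hm1) hd0 hd1).1
          rcases eq_or_lt_of_le h1 with he | h1'
          · exact Or.inl he.symm
          · have hjs : j ≤ s := claimA h1'
            have hm2 : ((s : ℤ) - j + i : ℝ) * p - (1 + δ₁ - (z - y))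
                = ((⌊(s : ℝ) * p⌋ - ⌊(j : ℝ) * p⌋ + ⌊(i : ℝ) * p⌋ - 1 : ℤ) : ℝ) := by
              rw [hy', hz', hδ₁]; push_cast [hf]; ring
            have h2 : δ₂ ≤ 1 - (1 + δ₁ - (z - y)) :=
              (lb ((s : ℤ) - j + i) (by omega) (by omega) (1 + δ₁ - (z - y)) _
                (by exact_mod_cast hm2) (by linarith) (by linarith)).2
            have h2' : δ₁ + δ₂ ≤ z - y := by linarith
            rcases eq_or_lt_of_le h2' with he | h3
            · exact Or.inr (Or.inr he.symm)
            · exact absurd h3 claimC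
        · exact absurd heq hij
        · have hm1 : ((i : ℤ) - j : ℝ) * p - (1 - (z - y)) = ((⌊(i : ℝ) * p⌋ - ⌊(j : ℝ) * p⌋ - 1 : ℤ) : ℝ) := by
            rw [hy', hz']; push_cast [hf]; ring
          have h1 : δ₂ ≤ 1 - (1 - (z - y)) :=
            (lb ((i : ℤ) - j) (by omega) (by omega) (1 - (z - y)) _
              (by exact_mod_cast hm1) (by linarith) (by linarith)).2
          have h1'' : δ₂ ≤ z - y := by linarith
          rcases eq_or_lt_of_le h1'' with he | h1'
          · exact Or.inr (Or.inl he.symm)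
          · have hit : i ≤ t := claimB h1'
            have hm2 : ((t : ℤ) - i + j : ℝ) * p - ((z - y) - δ₂)
                = ((⌊(t : ℝ) * p⌋ - ⌊(i : ℝ) * p⌋ + ⌊(j : ℝ) * p⌋ + 1 : ℤ) : ℝ) := by
              rw [hy', hz', hδ₂]; push_cast [hf]; ring
            have h2 : δ₁ ≤ (z - y) - δ₂ :=
              (lb ((t : ℤ) - i + j) (by omega) (by omega) ((z - y) - δ₂) _
                (by exact_mod_cast hm2) (by linarith) (by linarith)).1
            have h2' : δ₁ + δ₂ ≤ z - y := by linarith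
            rcases eq_or_lt_of_le h2' with he | h3
            · exact Or.inr (Or.inr he.symm)
            · exact absurd h3 claimC
      simpa using goal
    calc D.encard ≤ ({δ₁, δ₂, δ₁ + δ₂} : Set ℝ).encard := Set.encard_mono hsub
      _ ≤ 3 := by
        refine le_trans (Set.encard_insert_le _ _) ?_
        refine le_trans (add_le_add_left (Set.encard_insert_le _ _) 1) ?_
        simp [Set.encard_singleton]
        rfl
  · have hzero : ∀ i : ℕ, 1 ≤ i → i ≤ n → Int.fract ((i : ℕ) * p) = 0 := by
      intro i h1 h2
      by_contra h
      have hpos : 0 < Int.fract ((i : ℕ) * p) :=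
        lt_of_le_of_ne (Int.fract_nonneg _) (Ne.symm h)
      exact hne ⟨i, Finset.mem_filter.mpr ⟨Finset.mem_Icc.mpr ⟨h1, h2⟩, hpos⟩⟩
    have hsub : D ⊆ (∅ : Set ℝ) := by
      rw [hD]
      rintro d ⟨y, hy, z, hz, hyz, -, rfl⟩
      rw [hY] at hy hz
      obtain ⟨i, hi1, hi2, rfl⟩ := hy
      obtain ⟨j, hj1, hj2, rfl⟩ := hz
      rw [hzero i hi1 hi2, hzero j hj1 hj2] at hyz
      exact absurd hyz (lt_irrefl 0)
    exact le_trans (Set.encard_mono hsub) (by simp)
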